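/- Let F = FractionRing (MvPolynomial (Fin 4) ℚ), with Z₁, Z₂, Z₃, Z₄ ∈ F the images of the four polynomial variables, and let q = X be the variable of RatFunc F. Define H ∈ RatFunc F by H = (1/(4·q·(Z₄² − q²)))·∑_{a=1}^{3} (1/(2·Z_b²·Z_c²·q²))·( 1/(Z_a−q)² + 1/(Z_a+q)² ), where for each a the indices b, c are determined by {b,c} = {1,2,3}∖{a}. Then the coefficient at −1 (the residue at q = 0) of the image of H under the canonical embedding of RatFunc F into LaurentSeries F equals (3/(4·Z₁²·Z₂²·Z₃²·Z₄²))·(Z₁^{−2} + Z₂^{−2} + Z₃^{−2} + Z₄^{−2}). -/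

import Mathlib

open scoped LaurentSeries

noncomputable section

/-- The field of rational functions in four (transcendental) variables. -/
abbrev F4 : Type := FractionRing (MvPolynomial (Fin 4) ℚ)

/-- The images `Z₁, Z₂, Z₃, Z₄` of the polynomial variables in `F4`,
as constants of `RatFunc F4`. -/
def Z4 (i : Fin 4) : RatFunc F4 :=
  RatFunc.C (algebraMap (MvPolynomial (Fin 4) ℚ) F4 (MvPolynomial.X i))

/-- The image of the `i`-th variable in `F4`. -/
def ZF (i : Fin 4) : F4 := algebraMap (MvPolynomial (Fin 4) ℚ) F4 (MvPolynomial.X i)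

instance : CharZero F4 :=
  charZero_of_injective_algebraMap
    (IsFractionRing.injective (MvPolynomial (Fin 4) ℚ) F4)

/-- A quotient of polynomials whose denominator does not vanish at `0` has no
negative Laurent coefficients. -/
theorem regular_coeff_neg {K : Type*} [Field K] (P Q : Polynomial K)
    (hQ : Q.coeff 0 ≠ 0) {n : ℤ} (hn : n < 0) :
    ((((algebraMap (Polynomial K) (RatFunc K) P /
        algebraMap (Polynomial K) (RatFunc K) Q) : RatFunc K) : LaurentSeries K)).coeff n
      = 0 := by
  have hc : PowerSeries.constantCoeff (Q : PowerSeries K) ≠ 0 := by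
    rwa [Polynomial.constantCoeff_coe]
  have hQps : (Q : PowerSeries K) ≠ 0 := fun h => hc (by rw [h]; simp)
  have hofQ : (HahnSeries.ofPowerSeries ℤ K) (Q : PowerSeries K) ≠ 0 :=
    fun h => hQps (HahnSeries.ofPowerSeries_injective (Γ := ℤ) (h.trans (map_zero _).symm))
  have h1 : ((algebraMap (Polynomial K) (RatFunc K) P : RatFunc K) : LaurentSeries K)
      = HahnSeries.ofPowerSeries ℤ K (P : PowerSeries K) := (RatFunc.coe_coe P).symm
  have h2 : ((algebraMap (Polynomial K) (RatFunc K) Q : RatFunc K) : LaurentSeries K)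
      = HahnSeries.ofPowerSeries ℤ K (Q : PowerSeries K) := (RatFunc.coe_coe Q).symm
  have key : (((algebraMap (Polynomial K) (RatFunc K) P /
        algebraMap (Polynomial K) (RatFunc K) Q) : RatFunc K) : LaurentSeries K)
      = HahnSeries.ofPowerSeries ℤ K ((P : PowerSeries K) * (Q : PowerSeries K)⁻¹) := by
    rw [map_div₀, h1, h2, div_eq_iff hofQ, ← map_mul, mul_assoc,
      PowerSeries.inv_mul_cancel _ hc, mul_one]
  rw [key, HahnSeries.ofPowerSeries_apply]
  refine HahnSeries.embDomain_notin_range ?_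
  rintro ⟨m, hm⟩
  simp at hm
  omega

theorem coe_X_inv {K : Type*} [Field K] :
    ((RatFunc.X⁻¹ : RatFunc K) : LaurentSeries K) = HahnSeries.single (-1 : ℤ) (1 : K) := by
  rw [inv_eq_one_div, map_div₀, map_one, RatFunc.coe_X, one_div]
  refine inv_eq_of_mul_eq_one_right ?_
  rw [HahnSeries.single_mul_single]
  norm_num

theorem ratFunc_coe_C {K : Type*} [Field K] (a : K) :
    ((RatFunc.C a : RatFunc K) : LaurentSeries K) = HahnSeries.C a := by
  rw [← RatFunc.algebraMap_C]
  exact (RatFunc.coe_coe (Polynomial.C a)).symm.trans (by rw [Polynomial.coe_C, PowerSeries.coe_C])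

theorem sing1_coeff {K : Type*} [Field K] (a : K) :
    (((RatFunc.C a * RatFunc.X⁻¹ : RatFunc K)) : LaurentSeries K).coeff (-1) = a := by
  rw [map_mul, ratFunc_coe_C, coe_X_inv]
  have : (HahnSeries.C a : LaurentSeries K) = HahnSeries.single (0 : ℤ) a := rfl
  rw [this, HahnSeries.single_mul_single, zero_add, mul_one, HahnSeries.coeff_single_same]

theorem sing3_coeff {K : Type*} [Field K] (a : K) :
    (((RatFunc.C a * RatFunc.X⁻¹ ^ 3 : RatFunc K)) : LaurentSeries K).coeff (-1) = 0 := by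
  rw [map_mul, map_pow, ratFunc_coe_C, coe_X_inv,
    HahnSeries.single_pow]
  have : (HahnSeries.C a : LaurentSeries K) = HahnSeries.single (0 : ℤ) a := rfl
  rw [this, HahnSeries.single_mul_single]
  refine HahnSeries.coeff_single_of_ne ?_
  norm_num

set_option maxHeartbeats 1000000 in
/-- The residue at `q = 0` of a single term of the Airy recursion integrand. -/
theorem term_coeff {K : Type*} [Field K] [CharZero K] (u b c v : K)
    (hu : u ≠ 0) (hb : b ≠ 0) (hc : c ≠ 0) (hv : v ≠ 0) :
    ((((1 / (4 * RatFunc.X * (RatFunc.C v ^ 2 - RatFunc.X ^ 2))) *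
        ((1 / (2 * RatFunc.C b ^ 2 * RatFunc.C c ^ 2 * RatFunc.X ^ 2)) *
          (1 / (RatFunc.C u - RatFunc.X) ^ 2 + 1 / (RatFunc.C u + RatFunc.X) ^ 2))
        : RatFunc K)) : LaurentSeries K).coeff (-1)
      = (3 * v ^ 2 + u ^ 2) / (4 * u ^ 4 * b ^ 2 * c ^ 2 * v ^ 4) := by
  haveI : CharZero (RatFunc K) :=
    charZero_of_injective_algebraMap (IsFractionRing.injective (Polynomial K) (RatFunc K))
  set P : Polynomial K :=
    Polynomial.C ((5 : K) * u ^ 2 * v ^ 4 + (3 : K) * u ^ 4 * v ^ 2 + u ^ 6) * Polynomial.X ^ 1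
    + Polynomial.C ((-3 : K) * v ^ 4 + (-6 : K) * u ^ 2 * v ^ 2 + (-2 : K) * u ^ 4) * Polynomial.X ^ 3
    + Polynomial.C ((3 : K) * v ^ 2 + u ^ 2) * Polynomial.X ^ 5 with hP
  set Q : Polynomial K :=
    Polynomial.C (4 * u ^ 4 * b ^ 2 * c ^ 2 * v ^ 4) *
      ((Polynomial.C v ^ 2 - Polynomial.X ^ 2) *
        (Polynomial.C u ^ 2 - Polynomial.X ^ 2) ^ 2) with hQdef
  have hQ0 : Q.coeff 0 ≠ 0 := by
    rw [Polynomial.coeff_zero_eq_eval_zero, hQdef]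
    simp only [Polynomial.eval_mul, Polynomial.eval_pow, Polynomial.eval_sub,
      Polynomial.eval_C, Polynomial.eval_X]
    simp [hu, hb, hc, hv]
  have hQne : algebraMap (Polynomial K) (RatFunc K) Q ≠ 0 :=
    RatFunc.algebraMap_ne_zero (fun h => hQ0 (by rw [h]; simp))
  have hX : (RatFunc.X : RatFunc K) ≠ 0 := RatFunc.X_ne_zero
  have hCu : (RatFunc.C u : RatFunc K) ≠ 0 := by simpa using hu
  have hCb : (RatFunc.C b : RatFunc K) ≠ 0 := by simpa using hb
  have hCc : (RatFunc.C c : RatFunc K) ≠ 0 := by simpa using hc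
  have hCv : (RatFunc.C v : RatFunc K) ≠ 0 := by simpa using hv
  have humx : (RatFunc.C u - RatFunc.X : RatFunc K) ≠ 0 := by
    rw [← RatFunc.algebraMap_C (K := K) u, ← RatFunc.algebraMap_X, ← map_sub]
    exact RatFunc.algebraMap_ne_zero
      (fun h => Polynomial.X_sub_C_ne_zero u (by rw [← neg_sub]; simp [h]))
  have hupx : (RatFunc.C u + RatFunc.X : RatFunc K) ≠ 0 := by
    rw [← RatFunc.algebraMap_C (K := K) u, ← RatFunc.algebraMap_X, ← map_add]
    exact RatFunc.algebraMap_ne_zero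
      (fun h => Polynomial.X_add_C_ne_zero u (by rw [add_comm] at h; exact h))
  have hvmx : (RatFunc.C v ^ 2 - RatFunc.X ^ 2 : RatFunc K) ≠ 0 := by
    have h1 : (RatFunc.C v - RatFunc.X : RatFunc K) ≠ 0 := by
      rw [← RatFunc.algebraMap_C (K := K) v, ← RatFunc.algebraMap_X, ← map_sub]
      exact RatFunc.algebraMap_ne_zero
        (fun h => Polynomial.X_sub_C_ne_zero v (by rw [← neg_sub]; simp [h]))
    have h2 : (RatFunc.C v + RatFunc.X : RatFunc K) ≠ 0 := by
      rw [← RatFunc.algebraMap_C (K := K) v, ← RatFunc.algebraMap_X, ← map_add]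
      exact RatFunc.algebraMap_ne_zero
        (fun h => Polynomial.X_add_C_ne_zero v (by rw [add_comm] at h; exact h))
    have : (RatFunc.C v ^ 2 - RatFunc.X ^ 2 : RatFunc K)
        = (RatFunc.C v - RatFunc.X) * (RatFunc.C v + RatFunc.X) := by ring
    rw [this]; exact mul_ne_zero h1 h2
  have humx2 : (RatFunc.C u ^ 2 - RatFunc.X ^ 2 : RatFunc K) ≠ 0 := by
    have : (RatFunc.C u ^ 2 - RatFunc.X ^ 2 : RatFunc K)
        = (RatFunc.C u - RatFunc.X) * (RatFunc.C u + RatFunc.X) := by ring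
    rw [this]; exact mul_ne_zero humx hupx
  have h : ((1 / (4 * RatFunc.X * (RatFunc.C v ^ 2 - RatFunc.X ^ 2))) *
        ((1 / (2 * RatFunc.C b ^ 2 * RatFunc.C c ^ 2 * RatFunc.X ^ 2)) *
          (1 / (RatFunc.C u - RatFunc.X) ^ 2 + 1 / (RatFunc.C u + RatFunc.X) ^ 2))
        : RatFunc K)
      = RatFunc.C (1 / (4 * b ^ 2 * c ^ 2 * u ^ 2 * v ^ 2)) * RatFunc.X⁻¹ ^ 3
        + RatFunc.C ((3 * v ^ 2 + u ^ 2) / (4 * u ^ 4 * b ^ 2 * c ^ 2 * v ^ 4)) * RatFunc.X⁻¹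
        + algebraMap (Polynomial K) (RatFunc K) P / algebraMap (Polynomial K) (RatFunc K) Q := by
    have e1 : (1 / (RatFunc.C u - RatFunc.X) ^ 2 + 1 / (RatFunc.C u + RatFunc.X) ^ 2 : RatFunc K)
        = (2 * RatFunc.C u ^ 2 + 2 * RatFunc.X ^ 2) / (RatFunc.C u ^ 2 - RatFunc.X ^ 2) ^ 2 := by
      rw [div_add_div _ _ (pow_ne_zero 2 humx) (pow_ne_zero 2 hupx),
        div_eq_div_iff (mul_ne_zero (pow_ne_zero 2 humx) (pow_ne_zero 2 hupx))
          (pow_ne_zero 2 humx2)]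
      ring
    rw [hP, hQdef, e1, inv_eq_one_div]
    simp only [map_add, map_mul, map_pow, map_sub, map_neg, map_ofNat, map_one,
      RatFunc.algebraMap_C, RatFunc.algebraMap_X, map_div₀,
      div_pow, one_pow, div_mul_div_comm, one_mul, mul_one]
    have n4 : (4 : RatFunc K) ≠ 0 := by norm_num
    have n2 : (2 : RatFunc K) ≠ 0 := by norm_num
    have d1 : (4 * RatFunc.C b ^ 2 * RatFunc.C c ^ 2 * RatFunc.C u ^ 2 * RatFunc.C v ^ 2 *
        RatFunc.X ^ 3 : RatFunc K) ≠ 0 := by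
      simp [mul_eq_zero, pow_eq_zero_iff, hCb, hCc, hCu, hCv, hX, humx2, hvmx]
    have d2 : (4 * RatFunc.C u ^ 4 * RatFunc.C b ^ 2 * RatFunc.C c ^ 2 * RatFunc.C v ^ 4 *
        RatFunc.X : RatFunc K) ≠ 0 := by
      simp [mul_eq_zero, pow_eq_zero_iff, hCb, hCc, hCu, hCv, hX, humx2, hvmx]
    have d3 : (4 * RatFunc.C u ^ 4 * RatFunc.C b ^ 2 * RatFunc.C c ^ 2 * RatFunc.C v ^ 4 *
        ((RatFunc.C v ^ 2 - RatFunc.X ^ 2) * (RatFunc.C u ^ 2 - RatFunc.X ^ 2) ^ 2) : RatFunc K) ≠ 0 := by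
      simp [mul_eq_zero, pow_eq_zero_iff, hCb, hCc, hCu, hCv, hX, humx2, hvmx]
    have dL : (4 * RatFunc.X * (RatFunc.C v ^ 2 - RatFunc.X ^ 2) *
        (2 * RatFunc.C b ^ 2 * RatFunc.C c ^ 2 * RatFunc.X ^ 2 *
          (RatFunc.C u ^ 2 - RatFunc.X ^ 2) ^ 2) : RatFunc K) ≠ 0 := by
      simp [mul_eq_zero, pow_eq_zero_iff, hCb, hCc, hCu, hCv, hX, humx2, hvmx]
    rw [div_add_div _ _ d1 d2, div_add_div _ _ (mul_ne_zero d1 d2) d3,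
      div_eq_div_iff dL (mul_ne_zero (mul_ne_zero d1 d2) d3)]
    ring
  rw [h, map_add, map_add, HahnSeries.coeff_add, HahnSeries.coeff_add,
    sing3_coeff, sing1_coeff, regular_coeff_neg P Q hQ0 (by norm_num), zero_add, add_zero]

set_option maxHeartbeats 2000000 in
theorem airy_omega04_residue :
    ((((1 / (4 * RatFunc.X * ((Z4 3) ^ 2 - RatFunc.X ^ 2))) *
        ((1 / (2 * (Z4 1) ^ 2 * (Z4 2) ^ 2 * RatFunc.X ^ 2)) *
            (1 / ((Z4 0) - RatFunc.X) ^ 2 + 1 / ((Z4 0) + RatFunc.X) ^ 2)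
         + (1 / (2 * (Z4 0) ^ 2 * (Z4 2) ^ 2 * RatFunc.X ^ 2)) *
            (1 / ((Z4 1) - RatFunc.X) ^ 2 + 1 / ((Z4 1) + RatFunc.X) ^ 2)
         + (1 / (2 * (Z4 0) ^ 2 * (Z4 1) ^ 2 * RatFunc.X ^ 2)) *
            (1 / ((Z4 2) - RatFunc.X) ^ 2 + 1 / ((Z4 2) + RatFunc.X) ^ 2))) : RatFunc F4) :
      LaurentSeries F4).coeff (-1)
    = (3 / (4 * (ZF 0) ^ 2 * (ZF 1) ^ 2 * (ZF 2) ^ 2 * (ZF 3) ^ 2)) *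
        ((ZF 0) ^ (-2 : ℤ) + (ZF 1) ^ (-2 : ℤ) + (ZF 2) ^ (-2 : ℤ) + (ZF 3) ^ (-2 : ℤ)) := by
  have hz : ∀ i, ZF i ≠ 0 := fun i h =>
    MvPolynomial.X_ne_zero (R := ℚ) (σ := Fin 4) i
      (IsFractionRing.injective (MvPolynomial (Fin 4) ℚ) F4 (by rw [map_zero]; exact h))
  have hZ4 : ∀ i, Z4 i = RatFunc.C (ZF i) := fun i => rfl
  have hsplit : ((1 / (4 * RatFunc.X * ((Z4 3) ^ 2 - RatFunc.X ^ 2))) *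
        ((1 / (2 * (Z4 1) ^ 2 * (Z4 2) ^ 2 * RatFunc.X ^ 2)) *
            (1 / ((Z4 0) - RatFunc.X) ^ 2 + 1 / ((Z4 0) + RatFunc.X) ^ 2)
         + (1 / (2 * (Z4 0) ^ 2 * (Z4 2) ^ 2 * RatFunc.X ^ 2)) *
            (1 / ((Z4 1) - RatFunc.X) ^ 2 + 1 / ((Z4 1) + RatFunc.X) ^ 2)
         + (1 / (2 * (Z4 0) ^ 2 * (Z4 1) ^ 2 * RatFunc.X ^ 2)) *
            (1 / ((Z4 2) - RatFunc.X) ^ 2 + 1 / ((Z4 2) + RatFunc.X) ^ 2)) : RatFunc F4)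
      = (1 / (4 * RatFunc.X * (RatFunc.C (ZF 3) ^ 2 - RatFunc.X ^ 2))) *
          ((1 / (2 * RatFunc.C (ZF 1) ^ 2 * RatFunc.C (ZF 2) ^ 2 * RatFunc.X ^ 2)) *
            (1 / (RatFunc.C (ZF 0) - RatFunc.X) ^ 2 + 1 / (RatFunc.C (ZF 0) + RatFunc.X) ^ 2))
        + (1 / (4 * RatFunc.X * (RatFunc.C (ZF 3) ^ 2 - RatFunc.X ^ 2))) *
          ((1 / (2 * RatFunc.C (ZF 0) ^ 2 * RatFunc.C (ZF 2) ^ 2 * RatFunc.X ^ 2)) *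
            (1 / (RatFunc.C (ZF 1) - RatFunc.X) ^ 2 + 1 / (RatFunc.C (ZF 1) + RatFunc.X) ^ 2))
        + (1 / (4 * RatFunc.X * (RatFunc.C (ZF 3) ^ 2 - RatFunc.X ^ 2))) *
          ((1 / (2 * RatFunc.C (ZF 0) ^ 2 * RatFunc.C (ZF 1) ^ 2 * RatFunc.X ^ 2)) *
            (1 / (RatFunc.C (ZF 2) - RatFunc.X) ^ 2 + 1 / (RatFunc.C (ZF 2) + RatFunc.X) ^ 2)) := by
    simp only [hZ4]
    ring
  rw [hsplit, map_add, map_add, HahnSeries.coeff_add, HahnSeries.coeff_add,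
    term_coeff (ZF 0) (ZF 1) (ZF 2) (ZF 3) (hz 0) (hz 1) (hz 2) (hz 3),
    term_coeff (ZF 1) (ZF 0) (ZF 2) (ZF 3) (hz 1) (hz 0) (hz 2) (hz 3),
    term_coeff (ZF 2) (ZF 0) (ZF 1) (ZF 3) (hz 2) (hz 0) (hz 1) (hz 3)]
  have h0 := hz 0; have h1 := hz 1; have h2 := hz 2; have h3 := hz 3
  have hz2 : ∀ z : F4, z ^ (-2 : ℤ) = 1 / z ^ 2 := fun z => by
    have h2' : (-2 : ℤ) = -(2 : ℕ) := by norm_num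
    rw [h2', zpow_neg, zpow_natCast, one_div]
  simp only [hz2]
  have n4 : (4 : F4) ≠ 0 := by norm_num
  have P2 : ∀ i, (ZF i) ^ 2 ≠ 0 := fun i => pow_ne_zero 2 (hz i)
  have P4 : ∀ i, (ZF i) ^ 4 ≠ 0 := fun i => pow_ne_zero 4 (hz i)
  have hA1 : (4 * ZF 0 ^ 4 * ZF 1 ^ 2 * ZF 2 ^ 2 * ZF 3 ^ 4 : F4) ≠ 0 :=
    mul_ne_zero (mul_ne_zero (mul_ne_zero (mul_ne_zero n4 (P4 0)) (P2 1)) (P2 2)) (P4 3)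
  have hA2 : (4 * ZF 1 ^ 4 * ZF 0 ^ 2 * ZF 2 ^ 2 * ZF 3 ^ 4 : F4) ≠ 0 :=
    mul_ne_zero (mul_ne_zero (mul_ne_zero (mul_ne_zero n4 (P4 1)) (P2 0)) (P2 2)) (P4 3)
  have hA3 : (4 * ZF 2 ^ 4 * ZF 0 ^ 2 * ZF 1 ^ 2 * ZF 3 ^ 4 : F4) ≠ 0 :=
    mul_ne_zero (mul_ne_zero (mul_ne_zero (mul_ne_zero n4 (P4 2)) (P2 0)) (P2 1)) (P4 3)
  have hD : (4 * ZF 0 ^ 2 * ZF 1 ^ 2 * ZF 2 ^ 2 * ZF 3 ^ 2 : F4) ≠ 0 :=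
    mul_ne_zero (mul_ne_zero (mul_ne_zero (mul_ne_zero n4 (P2 0)) (P2 1)) (P2 2)) (P2 3)
  rw [div_add_div _ _ hA1 hA2, div_add_div _ _ (mul_ne_zero hA1 hA2) hA3,
    div_add_div _ _ (P2 0) (P2 1), div_add_div _ _ (mul_ne_zero (P2 0) (P2 1)) (P2 2),
    div_add_div _ _ (mul_ne_zero (mul_ne_zero (P2 0) (P2 1)) (P2 2)) (P2 3),
    div_mul_div_comm,
    div_eq_div_iff (mul_ne_zero (mul_ne_zero hA1 hA2) hA3)
      (mul_ne_zero hD (mul_ne_zero (mul_ne_zero (mul_ne_zero (P2 0) (P2 1)) (P2 2)) (P2 3)))]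
  ring
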